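/- (Grün's lemma.) If P is a perfect group, then the central quotient P/Z(P) is centerless, i.e., Z(P/Z(P)) is trivial. -/

import Mathlib

/-- Grün's lemma: if P is perfect, then P/Z(P) is centerless. -/
theorem stmt_8 (P : Type*) [Group P] (hperf : commutator P = ⊤) :
    Subgroup.center (P ⧸ Subgroup.center P) = ⊥ := by
  rw [Subgroup.eq_bot_iff_forall]
  intro x hx
  obtain ⟨g, rfl⟩ := QuotientGroup.mk_surjective x
  -- commutators of g with anything are central
  have hc : ∀ p : P, g * p * g⁻¹ * p⁻¹ ∈ Subgroup.center P := by
    intro p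
    have := (Subgroup.mem_center_iff.mp hx) (QuotientGroup.mk p)
    rw [← QuotientGroup.mk_mul, ← QuotientGroup.mk_mul, QuotientGroup.eq] at this
    have h2 : (p * g)⁻¹ * (g * p) ∈ Subgroup.center P := this
    have : g * p * g⁻¹ * p⁻¹ = (g * p) * ((p * g)⁻¹ * (g * p)) * (g * p)⁻¹ := by group
    rw [this]
    exact Subgroup.Normal.conj_mem inferInstance _ h2 (g * p)
  -- define hom f : P →* center P, p ↦ [g, p]
  let f : P →* Subgroup.center P :=
    { toFun := fun p => ⟨g * p * g⁻¹ * p⁻¹, hc p⟩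
      map_one' := by ext; simp
      map_mul' := by
        intro p q
        ext
        have hq := (Subgroup.mem_center_iff.mp (hc q)) p
        show g * (p * q) * g⁻¹ * (p * q)⁻¹ = (g * p * g⁻¹ * p⁻¹) * (g * q * g⁻¹ * q⁻¹)
        have : g * (p * q) * g⁻¹ * (p * q)⁻¹
            = (g * p * g⁻¹ * p⁻¹) * (p * (g * q * g⁻¹ * q⁻¹) * p⁻¹) := by group
        rw [this, hq]
        group }
  have hker : ∀ p : P, f p = 1 := by
    intro p
    have : p ∈ f.ker := by
      letI : CommGroup (Subgroup.center P) := { (Subgroup.center P).toGroup with mul_comm := mul_comm' }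
      apply Abelianization.commutator_subset_ker f
      rw [hperf]; trivial
    exact this
  have hg : g ∈ Subgroup.center P := by
    rw [Subgroup.mem_center_iff]
    intro p
    have := hker p
    have h1 : g * p * g⁻¹ * p⁻¹ = 1 := congrArg Subtype.val this
    calc p * g = (g * p * g⁻¹ * p⁻¹)⁻¹ * (g * p) := by group
    _ = g * p := by rw [h1]; group
  rwa [← QuotientGroup.eq_one_iff g] at hg
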